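/- arXiv:1702.08213 — 3 statements merged into one kernel-verified Lean document; each statement's English description precedes it below -/
import Mathlib

section
/- Assume moreover that ‖g₁(x,y)‖ ≤ C for all (x,y), for some constant C > 0, and that ρ(ε) < 1. Let (x̃^ε, ỹ^ε) ∈ C_{−γ}^−(E₁ × E₂) be the unique solution of the time-rescaled slow–fast integral system with initial slow value x₀, and let y⁰ ∈ C_{−γ}^−(E₂) be the unique solution of the critical integral equation y⁰(t) = ∫_{−∞}^t exp((t−s)F) g₂(x₀, y⁰(s) + σξ(s)) ds. Set C₁ := (‖Sx₀‖ + C)/γ_s and q(t, ε) := e^{(γ+εγ_s)t}/(γ_f − εγ_s) − e^{γt}/γ_f for t ≤ 0. Then sup_{t≤0} e^{γt}‖ỹ^ε(t) − y⁰(t)‖ ≤ (K·C₁/(1 + K/(γ + γ_f))) · sup_{t≤0} q(t, ε). -/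
open MeasureTheory Real Filter

noncomputable section

/-- Weighted sup-norm `sup_{t ≤ 0} e^{-β t} ‖φ t‖` on `(-∞,0]`. -/
def negNorm {E : Type*} [NormedAddCommGroup E] (β : ℝ) (φ : ℝ → E) : ℝ :=
  ⨆ t : Set.Iic (0 : ℝ), Real.exp (-β * t.1) * ‖φ t.1‖

/-- Membership in the Banach space `C_β^-(E)` of continuous functions on `(-∞,0]`
with finite weighted sup-norm. -/
def MemCneg {E : Type*} [NormedAddCommGroup E] (β : ℝ) (φ : ℝ → E) : Prop :=
  ContinuousOn φ (Set.Iic 0) ∧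
    BddAbove (Set.range fun t : Set.Iic (0 : ℝ) => Real.exp (-β * t.1) * ‖φ t.1‖)

/-- Weighted sup-norm `sup_{t ≥ 0} e^{-β t} ‖φ t‖` on `[0,∞)`. -/
def posNorm {E : Type*} [NormedAddCommGroup E] (β : ℝ) (φ : ℝ → E) : ℝ :=
  ⨆ t : Set.Ici (0 : ℝ), Real.exp (-β * t.1) * ‖φ t.1‖

/-- Membership in the Banach space `C_β^+(E)` of continuous functions on `[0,∞)`
with finite weighted sup-norm. -/
def MemCpos {E : Type*} [NormedAddCommGroup E] (β : ℝ) (φ : ℝ → E) : Prop :=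
  ContinuousOn φ (Set.Ici 0) ∧
    BddAbove (Set.range fun t : Set.Ici (0 : ℝ) => Real.exp (-β * t.1) * ‖φ t.1‖)

variable {E₁ E₂ : Type*}
  [NormedAddCommGroup E₁] [NormedSpace ℝ E₁]
  [NormedAddCommGroup E₂] [NormedSpace ℝ E₂]

/-- Slow component of the Lyapunov–Perron operator `I^ε_{x₀}`. -/
def LPslow (S : E₁ →L[ℝ] E₁) (g1 : ℝ → E₁ → E₂ → E₁) (x0 : E₁)
    (x : ℝ → E₁) (y : ℝ → E₂) (t : ℝ) : E₁ :=
  NormedSpace.exp (t • S) x0 +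
    ∫ s in (0:ℝ)..t, NormedSpace.exp ((t - s) • S) (g1 s (x s) (y s))

/-- Fast component of the Lyapunov–Perron operator `I^ε_{x₀}`. -/
def LPfast (F : E₂ →L[ℝ] E₂) (g2 : ℝ → E₁ → E₂ → E₂) (ε : ℝ)
    (x : ℝ → E₁) (y : ℝ → E₂) (t : ℝ) : E₂ :=
  (1/ε) • ∫ s in Set.Iic t, NormedSpace.exp (((t - s)/ε) • F) (g2 s (x s) (y s))

/-- Slow component of the time-rescaled slow–fast integral system. -/
def RSslow (S : E₁ →L[ℝ] E₁) (g1 : E₁ → E₂ → E₁) (σ ε : ℝ) (ξ : ℝ → E₂) (x0 : E₁)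
    (x : ℝ → E₁) (y : ℝ → E₂) (t : ℝ) : E₁ :=
  NormedSpace.exp ((ε * t) • S) x0 +
    ε • ∫ s in (0:ℝ)..t, NormedSpace.exp ((ε * (t - s)) • S) (g1 (x s) (y s + σ • ξ s))

/-- Fast component of the time-rescaled slow–fast integral system. -/
def RSfast (F : E₂ →L[ℝ] E₂) (g2 : E₁ → E₂ → E₂) (σ : ℝ) (ξ : ℝ → E₂)
    (x : ℝ → E₁) (y : ℝ → E₂) (t : ℝ) : E₂ :=
  ∫ s in Set.Iic t, NormedSpace.exp ((t - s) • F) (g2 (x s) (y s + σ • ξ s))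

/-- Right-hand side of the critical (`ε = 0`) integral equation. -/
def Crit (F : E₂ →L[ℝ] E₂) (g2 : E₁ → E₂ → E₂) (σ : ℝ) (ξ : ℝ → E₂) (x0 : E₁)
    (y : ℝ → E₂) (t : ℝ) : E₂ :=
  ∫ s in Set.Iic t, NormedSpace.exp ((t - s) • F) (g2 x0 (y s + σ • ξ s))

/-! ### Auxiliary lemmas for the proof -/

lemma integral_exp_mul_ab (c a b : ℝ) (hc : c ≠ 0) :
    ∫ x in a..b, Real.exp (c * x) = (Real.exp (c*b) - Real.exp (c*a))/c := by
  rw [intervalIntegral.integral_comp_mul_left (fun x => Real.exp x) hc,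
    integral_exp, smul_eq_mul]
  ring

set_option maxHeartbeats 2000000 in
/-- Comparison of the rescaled fast component with the critical-manifold
fast component: `sup_{t≤0} e^{γt}‖ỹ^ε(t) - y⁰(t)‖ ≤ (K C₁/(1+K/(γ+γ_f))) sup_{t≤0} q(t,ε)`. -/
theorem rescaled_fast_component_estimate
    {E₁ E₂ : Type*}
    [NormedAddCommGroup E₁] [NormedSpace ℝ E₁] [FiniteDimensional ℝ E₁] [MeasurableSpace E₁] [BorelSpace E₁]
    [NormedAddCommGroup E₂] [NormedSpace ℝ E₂] [FiniteDimensional ℝ E₂] [MeasurableSpace E₂] [BorelSpace E₂]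
    (S : E₁ →L[ℝ] E₁) (F : E₂ →L[ℝ] E₂)
    (γs γf γ K σ : ℝ)
    (hγs : 0 < γs) (hγf : γf < 0) (hγ : 0 < γ) (hK : 0 < K)
    (hgap : K < -(γ + γf)) (hσ : 0 ≤ σ)
    (hS : ∀ t ≤ (0:ℝ), ∀ x : E₁, ‖NormedSpace.exp (t • S) x‖ ≤ Real.exp (γs * t) * ‖x‖)
    (hF : ∀ t ≥ (0:ℝ), ∀ y : E₂, ‖NormedSpace.exp (t • F) y‖ ≤ Real.exp (γf * t) * ‖y‖)
    (g1 : E₁ → E₂ → E₁) (g2 : E₁ → E₂ → E₂)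
    (hg1l : ∀ x₁ y₁ x₂ y₂, ‖g1 x₁ y₁ - g1 x₂ y₂‖ ≤ K * (‖x₁ - x₂‖ + ‖y₁ - y₂‖))
    (hg2l : ∀ x₁ y₁ x₂ y₂, ‖g2 x₁ y₁ - g2 x₂ y₂‖ ≤ K * (‖x₁ - x₂‖ + ‖y₁ - y₂‖))
    (hg10 : g1 0 0 = 0) (hg20 : g2 0 0 = 0)
    (ξ : ℝ → E₂) (hξm : Measurable ξ)
    (hξb : ∀ r : ℝ, ∃ M, ∀ t : ℝ, |t| ≤ r → ‖ξ t‖ ≤ M)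
    (hξ : ∃ M, ∀ t ≤ (0:ℝ), Real.exp (γ * t) * ‖ξ t‖ ≤ M)
    (ε : ℝ) (hε : 0 < ε) (hρ : (ε * K / (γ + ε * γs) - K / (γ + γf)) < 1)
    (C : ℝ) (hC : 0 < C) (hg1bd : ∀ x y, ‖g1 x y‖ ≤ C)
    (x0 : E₁) (xt : ℝ → E₁) (yt : ℝ → E₂)
    (hmem : MemCneg (-γ) xt ∧ MemCneg (-γ) yt)
    (hsol : ∀ t ≤ (0:ℝ), xt t = RSslow S g1 σ ε ξ x0 xt yt t ∧
      yt t = RSfast F g2 σ ξ xt yt t)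
    (y0fn : ℝ → E₂)
    (hmem0 : MemCneg (-γ) y0fn)
    (hsol0 : ∀ t ≤ (0:ℝ), y0fn t = Crit F g2 σ ξ x0 y0fn t) :
    negNorm (-γ) (fun t => yt t - y0fn t) ≤
      K * ((‖S x0‖ + C) / γs) / (1 + K / (γ + γf)) *
        ⨆ t : Set.Iic (0:ℝ),
          (Real.exp ((γ + ε * γs) * t.1) / (γf - ε * γs) - Real.exp (γ * t.1) / γf) := by
  classical
  haveI : Nonempty (Set.Iic (0:ℝ)) := ⟨⟨0, Set.self_mem_Iic⟩⟩
  obtain ⟨⟨hxc, hxb⟩, ⟨hyc, hyb⟩⟩ := hmem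
  obtain ⟨hy0c, hy0b⟩ := hmem0
  obtain ⟨M, hM⟩ := hξ
  obtain ⟨Nx, hNx⟩ := hxb
  obtain ⟨Ny, hNy⟩ := hyb
  obtain ⟨N0, hN0⟩ := hy0b
  -- basic positivity facts
  have hgf : γ + γf < 0 := by linarith
  have ha1 : (0:ℝ) < -γf := by linarith
  have ha2 : (0:ℝ) < ε * γs - γf := by nlinarith
  have ha3 : (0:ℝ) < -(γ + γf) := by linarith
  have hM0 : 0 ≤ M := by
    have := hM 0 le_rfl
    have h0 := norm_nonneg (ξ 0)
    nlinarith [Real.exp_pos (γ * (0:ℝ))]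
  -- conversion of weighted bounds
  have hconv : ∀ (N v s : ℝ), Real.exp (γ*s) * v ≤ N → v ≤ N * Real.exp (-γ*s) := by
    intro N v s h
    have e1 : Real.exp (-γ*s) * Real.exp (γ*s) = 1 := by
      rw [← Real.exp_add, show -γ*s + γ*s = 0 by ring, Real.exp_zero]
    have h2 := mul_le_mul_of_nonneg_left h (le_of_lt (Real.exp_pos (-γ*s)))
    calc v = Real.exp (-γ*s) * (Real.exp (γ*s) * v) := by rw [← mul_assoc, e1, one_mul]
      _ ≤ Real.exp (-γ*s) * N := h2
      _ = N * Real.exp (-γ*s) := mul_comm _ _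
  have hNx' : ∀ s ≤ (0:ℝ), ‖xt s‖ ≤ Nx * Real.exp (-γ*s) := by
    intro s hs
    refine hconv _ _ _ ?_
    have := hNx ⟨⟨s, hs⟩, rfl⟩
    simpa [neg_neg] using this
  have hNy' : ∀ s ≤ (0:ℝ), ‖yt s‖ ≤ Ny * Real.exp (-γ*s) := by
    intro s hs
    refine hconv _ _ _ ?_
    have := hNy ⟨⟨s, hs⟩, rfl⟩
    simpa [neg_neg] using this
  have hN0' : ∀ s ≤ (0:ℝ), ‖y0fn s‖ ≤ N0 * Real.exp (-γ*s) := by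
    intro s hs
    refine hconv _ _ _ ?_
    have := hN0 ⟨⟨s, hs⟩, rfl⟩
    simpa [neg_neg] using this
  have hM' : ∀ s ≤ (0:ℝ), ‖ξ s‖ ≤ M * Real.exp (-γ*s) := fun s hs => hconv _ _ _ (hM s hs)
  -- the deviation function and its weighted norm
  set D := negNorm (-γ) (fun t => yt t - y0fn t) with hDdef
  clear_value D
  have hDb : BddAbove (Set.range fun t : Set.Iic (0:ℝ) =>
      Real.exp (-(-γ) * t.1) * ‖yt t.1 - y0fn t.1‖) := by
    refine ⟨Ny + N0, ?_⟩
    rintro v ⟨⟨s, hs⟩, rfl⟩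
    simp only [neg_neg]
    have h1 : ‖yt s - y0fn s‖ ≤ ‖yt s‖ + ‖y0fn s‖ := norm_sub_le _ _
    have h2 := hNy ⟨⟨s, hs⟩, rfl⟩
    have h3 := hN0 ⟨⟨s, hs⟩, rfl⟩
    simp only [neg_neg] at h2 h3
    nlinarith [Real.exp_pos (γ * s), norm_nonneg (yt s), norm_nonneg (y0fn s)]
  have hDle : ∀ s ≤ (0:ℝ), ‖yt s - y0fn s‖ ≤ D * Real.exp (-γ*s) := by
    intro s hs
    refine hconv _ _ _ ?_
    have := le_ciSup hDb ⟨s, hs⟩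
    simpa [hDdef, negNorm, neg_neg] using this
  -- Lipschitz continuity of g1 and g2
  have hg1c : Continuous fun p : E₁ × E₂ => g1 p.1 p.2 := by
    have : LipschitzWith (Real.toNNReal (2*K)) fun p : E₁ × E₂ => g1 p.1 p.2 := by
      apply LipschitzWith.of_dist_le_mul
      intro p q
      have h := hg1l p.1 p.2 q.1 q.2
      have h1 : dist p.1 q.1 ≤ dist p q := by rw [Prod.dist_eq]; exact le_max_left _ _
      have h2 : dist p.2 q.2 ≤ dist p q := by rw [Prod.dist_eq]; exact le_max_right _ _
      rw [dist_eq_norm] at h1 h2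
      rw [Real.coe_toNNReal _ (by positivity)]
      calc dist (g1 p.1 p.2) (g1 q.1 q.2) = ‖g1 p.1 p.2 - g1 q.1 q.2‖ := dist_eq_norm _ _
        _ ≤ K * (‖p.1 - q.1‖ + ‖p.2 - q.2‖) := h
        _ ≤ 2*K * dist p q := by nlinarith [dist_nonneg (x := p) (y := q)]
    exact this.continuous
  have hg2c : Continuous fun p : E₁ × E₂ => g2 p.1 p.2 := by
    have : LipschitzWith (Real.toNNReal (2*K)) fun p : E₁ × E₂ => g2 p.1 p.2 := by
      apply LipschitzWith.of_dist_le_mul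
      intro p q
      have h := hg2l p.1 p.2 q.1 q.2
      have h1 : dist p.1 q.1 ≤ dist p q := by rw [Prod.dist_eq]; exact le_max_left _ _
      have h2 : dist p.2 q.2 ≤ dist p q := by rw [Prod.dist_eq]; exact le_max_right _ _
      rw [dist_eq_norm] at h1 h2
      rw [Real.coe_toNNReal _ (by positivity)]
      calc dist (g2 p.1 p.2) (g2 q.1 q.2) = ‖g2 p.1 p.2 - g2 q.1 q.2‖ := dist_eq_norm _ _
        _ ≤ K * (‖p.1 - q.1‖ + ‖p.2 - q.2‖) := h
        _ ≤ 2*K * dist p q := by nlinarith [dist_nonneg (x := p) (y := q)]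
    exact this.continuous
  have hg2n : ∀ x y, ‖g2 x y‖ ≤ K * (‖x‖ + ‖y‖) := by
    intro x y
    simpa [hg20] using hg2l x y 0 0
  -- measurability helpers
  have hexpFc : ∀ t : ℝ, Continuous fun s : ℝ => NormedSpace.exp ((t - s) • F) := fun t => by
    letI : NormedAlgebra ℚ (E₂ →L[ℝ] E₂) := .restrictScalars ℚ ℝ _
    exact NormedSpace.exp_continuous.comp ((continuous_const.sub continuous_id).smul continuous_const)
  have hmeasF : ∀ t : ℝ, ∀ w : ℝ → E₂, AEStronglyMeasurable w (volume.restrict (Set.Iic t)) →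
      AEStronglyMeasurable (fun s => (NormedSpace.exp ((t - s) • F)) (w s))
        (volume.restrict (Set.Iic t)) := by
    intro t w hw
    exact (isBoundedBilinearMap_apply.continuous).comp_aestronglyMeasurable
      (((hexpFc t).aestronglyMeasurable).prodMk hw)
  have hGm : ∀ t ≤ (0:ℝ), AEStronglyMeasurable (fun s => g2 (xt s) (yt s + σ • ξ s))
      (volume.restrict (Set.Iic t)) := by
    intro t ht
    have hxm : AEStronglyMeasurable xt (volume.restrict (Set.Iic t)) :=
      (hxc.mono (Set.Iic_subset_Iic.mpr ht)).aestronglyMeasurable measurableSet_Iic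
    have hym : AEStronglyMeasurable yt (volume.restrict (Set.Iic t)) :=
      (hyc.mono (Set.Iic_subset_Iic.mpr ht)).aestronglyMeasurable measurableSet_Iic
    have hξm' : AEStronglyMeasurable (fun s => σ • ξ s) (volume.restrict (Set.Iic t)) :=
      (hξm.aestronglyMeasurable).const_smul σ
    exact hg2c.comp_aestronglyMeasurable (hxm.prodMk (hym.add hξm'))
  have hG0m : ∀ t ≤ (0:ℝ), AEStronglyMeasurable (fun s => g2 x0 (y0fn s + σ • ξ s))
      (volume.restrict (Set.Iic t)) := by
    intro t ht
    have hy0m : AEStronglyMeasurable y0fn (volume.restrict (Set.Iic t)) :=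
      (hy0c.mono (Set.Iic_subset_Iic.mpr ht)).aestronglyMeasurable measurableSet_Iic
    have hξm' : AEStronglyMeasurable (fun s => σ • ξ s) (volume.restrict (Set.Iic t)) :=
      (hξm.aestronglyMeasurable).const_smul σ
    exact hg2c.comp_aestronglyMeasurable (aestronglyMeasurable_const.prodMk (hy0m.add hξm'))
  -- integrability of the fast integrands
  have hintF : ∀ t ≤ (0:ℝ), ∀ (w : ℝ → E₂) (Bw : ℝ),
      AEStronglyMeasurable w (volume.restrict (Set.Iic t)) →
      (∀ s ≤ (0:ℝ), ‖w s‖ ≤ Bw * Real.exp (-γ*s)) →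
      IntegrableOn (fun s => (NormedSpace.exp ((t - s) • F)) (w s)) (Set.Iic t) := by
    intro t ht w Bw hwm hwb
    refine Integrable.mono'
      ((integrableOn_exp_mul_Iic ha3 t).const_mul (Bw * Real.exp (γf*t)))
      (hmeasF t w hwm) ?_
    rw [ae_restrict_iff' measurableSet_Iic]
    refine ae_of_all _ fun s hs => ?_
    rw [Set.mem_Iic] at hs
    have hs0 : s ≤ 0 := le_trans hs ht
    have h1 : Real.exp (γf*(t-s)) = Real.exp (γf*t) * Real.exp (-(γ+γf)*s) * Real.exp (γ*s) := by
      rw [← Real.exp_add, ← Real.exp_add]; congr 1; ring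
    have h2 : Real.exp (γ*s) * Real.exp (-γ*s) = 1 := by
      rw [← Real.exp_add, show γ*s + -γ*s = 0 by ring, Real.exp_zero]
    calc ‖(NormedSpace.exp ((t - s) • F)) (w s)‖
        ≤ Real.exp (γf*(t-s)) * ‖w s‖ := hF (t-s) (by linarith) _
      _ ≤ Real.exp (γf*(t-s)) * (Bw * Real.exp (-γ*s)) :=
          mul_le_mul_of_nonneg_left (hwb s hs0) (Real.exp_pos _).le
      _ = Bw * Real.exp (γf*t) * Real.exp (-(γ+γf)*s) := by
          linear_combination (Bw * Real.exp (-γ*s)) * h1 +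
            (Bw * Real.exp (γf*t) * Real.exp (-(γ+γf)*s)) * h2
  have hGbnd : ∀ s ≤ (0:ℝ), ‖g2 (xt s) (yt s + σ • ξ s)‖ ≤ (K*(Nx+Ny+σ*M)) * Real.exp (-γ*s) := by
    intro s hs
    have h2 : ‖yt s + σ•ξ s‖ ≤ Ny*Real.exp (-γ*s) + σ*(M*Real.exp (-γ*s)) := by
      refine (norm_add_le _ _).trans (add_le_add (hNy' s hs) ?_)
      rw [norm_smul, Real.norm_eq_abs, abs_of_nonneg hσ]
      exact mul_le_mul_of_nonneg_left (hM' s hs) hσ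
    calc ‖g2 (xt s) (yt s + σ•ξ s)‖ ≤ K*(‖xt s‖ + ‖yt s + σ•ξ s‖) := hg2n _ _
      _ ≤ K*(Nx*Real.exp (-γ*s) + (Ny*Real.exp (-γ*s) + σ*(M*Real.exp (-γ*s)))) :=
          mul_le_mul_of_nonneg_left (add_le_add (hNx' s hs) h2) hK.le
      _ = (K*(Nx+Ny+σ*M)) * Real.exp (-γ*s) := by ring
  have hG0bnd : ∀ s ≤ (0:ℝ), ‖g2 x0 (y0fn s + σ • ξ s)‖ ≤ (K*(‖x0‖+N0+σ*M)) * Real.exp (-γ*s) := by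
    intro s hs
    have hx0e : ‖x0‖ ≤ ‖x0‖ * Real.exp (-γ*s) := by
      nlinarith [Real.one_le_exp (by nlinarith : (0:ℝ) ≤ -γ*s), norm_nonneg x0]
    have h2 : ‖y0fn s + σ•ξ s‖ ≤ N0*Real.exp (-γ*s) + σ*(M*Real.exp (-γ*s)) := by
      refine (norm_add_le _ _).trans (add_le_add (hN0' s hs) ?_)
      rw [norm_smul, Real.norm_eq_abs, abs_of_nonneg hσ]
      exact mul_le_mul_of_nonneg_left (hM' s hs) hσ
    calc ‖g2 x0 (y0fn s + σ•ξ s)‖ ≤ K*(‖x0‖ + ‖y0fn s + σ•ξ s‖) := hg2n _ _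
      _ ≤ K*(‖x0‖*Real.exp (-γ*s) + (N0*Real.exp (-γ*s) + σ*(M*Real.exp (-γ*s)))) :=
          mul_le_mul_of_nonneg_left (add_le_add hx0e h2) hK.le
      _ = (K*(‖x0‖+N0+σ*M)) * Real.exp (-γ*s) := by ring
  have hGint : ∀ t ≤ (0:ℝ), IntegrableOn
      (fun s => (NormedSpace.exp ((t - s) • F)) (g2 (xt s) (yt s + σ • ξ s))) (Set.Iic t) :=
    fun t ht => hintF t ht _ _ (hGm t ht) hGbnd
  have hG0int : ∀ t ≤ (0:ℝ), IntegrableOn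
      (fun s => (NormedSpace.exp ((t - s) • F)) (g2 x0 (y0fn s + σ • ξ s))) (Set.Iic t) :=
    fun t ht => hintF t ht _ _ (hG0m t ht) hG0bnd
  -- the slow estimate
  set C₁ : ℝ := (‖S x0‖ + C)/γs with hC₁def
  clear_value C₁
  have hslow : ∀ s ≤ (0:ℝ), ‖xt s - x0‖ ≤ C₁ * (1 - Real.exp (ε*γs*s)) := by
    intro s hs
    have hEle1 : Real.exp (ε*γs*s) ≤ 1 := Real.exp_le_one_iff.mpr (mul_nonpos_of_nonneg_of_nonpos (by positivity) hs)
    set A : E₁ →L[ℝ] E₁ := ε • S with hAdef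
    have hder : ∀ u : ℝ, HasDerivAt (fun v : ℝ => (NormedSpace.exp (v • A)) x0)
        ((NormedSpace.exp (u • A)) (A x0)) u := fun u => by
      simpa using (hasDerivAt_exp_smul_const (𝕂 := ℝ) A u).clm_apply (hasDerivAt_const u x0)
    have hcont' : Continuous fun u : ℝ => (NormedSpace.exp (u • A)) (A x0) := by
      letI : NormedAlgebra ℚ (E₁ →L[ℝ] E₁) := .restrictScalars ℚ ℝ _
      exact (NormedSpace.exp_continuous.comp (continuous_id.smul continuous_const)).clm_apply
        continuous_const
    have hftc : ∫ u in s..(0:ℝ), (NormedSpace.exp (u • A)) (A x0) =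
        x0 - (NormedSpace.exp (s • A)) x0 := by
      have h := intervalIntegral.integral_eq_sub_of_hasDerivAt
        (f := fun v : ℝ => (NormedSpace.exp (v • A)) x0) (fun u _ => hder u)
        (hcont'.intervalIntegrable s 0)
      simpa [NormedSpace.exp_zero] using h
    have hbd1 : ∀ u ∈ Set.Ioc s (0:ℝ), ‖(NormedSpace.exp (u • A)) (A x0)‖ ≤
        (ε*‖S x0‖) * Real.exp ((ε*γs)*u) := by
      intro u hu
      have hu0 : ε*u ≤ 0 := mul_nonpos_of_nonneg_of_nonpos hε.le hu.2
      have hax : A x0 = ε • S x0 := by rw [hAdef, ContinuousLinearMap.smul_apply]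
      have heq : u • A = (ε*u) • S := by rw [hAdef, smul_smul, mul_comm]
      rw [hax, ContinuousLinearMap.map_smul, norm_smul, Real.norm_eq_abs, abs_of_pos hε, heq]
      have h2 := hS (ε*u) hu0 (S x0)
      calc ε * ‖(NormedSpace.exp ((ε*u) • S)) (S x0)‖
          ≤ ε * (Real.exp (γs*(ε*u)) * ‖S x0‖) := mul_le_mul_of_nonneg_left h2 hε.le
        _ = (ε*‖S x0‖) * Real.exp ((ε*γs)*u) := by
            rw [show γs*(ε*u) = (ε*γs)*u by ring]; ring
    have h1 : ‖(NormedSpace.exp ((ε*s) • S)) x0 - x0‖ ≤ ‖S x0‖/γs * (1 - Real.exp (ε*γs*s)) := by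
      have heqs : (ε*s) • S = s • A := by rw [hAdef, smul_smul, mul_comm]
      rw [heqs, show (NormedSpace.exp (s • A)) x0 - x0
          = -(∫ u in s..(0:ℝ), (NormedSpace.exp (u • A)) (A x0)) by rw [hftc, neg_sub],
        norm_neg]
      refine le_trans (intervalIntegral.norm_integral_le_of_norm_le hs
        (g := fun u => (ε*‖S x0‖) * Real.exp ((ε*γs)*u)) ?_ ?_) ?_
      · exact ae_of_all _ hbd1
      · exact Continuous.intervalIntegrable (by fun_prop) _ _
      · have hεγs : (ε*γs) ≠ 0 := ne_of_gt (by positivity)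
        rw [intervalIntegral.integral_const_mul, integral_exp_mul_ab _ _ _ hεγs, mul_zero,
          Real.exp_zero]
        apply le_of_eq
        rw [show (ε*γs)*s = ε*γs*s by ring]
        field_simp
    have h2 : ‖ε • ∫ u in (0:ℝ)..s, NormedSpace.exp ((ε * (s - u)) • S)
          (g1 (xt u) (yt u + σ • ξ u))‖ ≤ C/γs * (1 - Real.exp (ε*γs*s)) := by
      rw [norm_smul, Real.norm_eq_abs, abs_of_pos hε, intervalIntegral.integral_symm, norm_neg]
      have hbd2 : ∀ u ∈ Set.Ioc s (0:ℝ),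
          ‖NormedSpace.exp ((ε * (s - u)) • S) (g1 (xt u) (yt u + σ • ξ u))‖ ≤
            (C * Real.exp ((ε*γs)*s)) * Real.exp ((-(ε*γs))*u) := by
        intro u hu
        have hsu : ε*(s-u) ≤ 0 := mul_nonpos_of_nonneg_of_nonpos hε.le (by linarith [hu.1])
        calc ‖NormedSpace.exp ((ε * (s - u)) • S) (g1 (xt u) (yt u + σ • ξ u))‖
            ≤ Real.exp (γs*(ε*(s-u))) * ‖g1 (xt u) (yt u + σ • ξ u)‖ := hS _ hsu _
          _ ≤ Real.exp (γs*(ε*(s-u))) * C :=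
              mul_le_mul_of_nonneg_left (hg1bd _ _) (Real.exp_pos _).le
          _ = (C * Real.exp ((ε*γs)*s)) * Real.exp ((-(ε*γs))*u) := by
              rw [show γs*(ε*(s-u)) = (ε*γs)*s + (-(ε*γs))*u by ring, Real.exp_add]; ring
      have hle := intervalIntegral.norm_integral_le_of_norm_le (μ := volume)
        (f := fun u => NormedSpace.exp ((ε * (s - u)) • S) (g1 (xt u) (yt u + σ • ξ u)))
        (g := fun u => (C * Real.exp ((ε*γs)*s)) * Real.exp ((-(ε*γs))*u))
        (a := s) (b := 0) hs
        (ae_of_all _ hbd2)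
        (Continuous.intervalIntegrable (by fun_prop) _ _)
      refine le_trans (mul_le_mul_of_nonneg_left hle hε.le) ?_
      have hεγs : (-(ε*γs)) ≠ 0 := by
        simp only [ne_eq, neg_eq_zero]; positivity
      rw [intervalIntegral.integral_const_mul, integral_exp_mul_ab _ _ _ hεγs, mul_zero,
        Real.exp_zero]
      have hinv : Real.exp ((ε*γs)*s) * Real.exp ((-(ε*γs))*s) = 1 := by
        rw [← Real.exp_add, show (ε*γs)*s + (-(ε*γs))*s = 0 by ring, Real.exp_zero]
      have hEpos := Real.exp_pos ((ε*γs)*s)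
      have hEpos' := Real.exp_pos ((-(ε*γs))*s)
      apply le_of_eq
      have hE : Real.exp (ε*γs*s) = Real.exp ((ε*γs)*s) := by rw [show (ε*γs)*s = ε*γs*s by ring]
      have hE' : Real.exp ((-(ε*γs))*s) = (Real.exp ((ε*γs)*s))⁻¹ := by
        rw [show (-(ε*γs))*s = -((ε*γs)*s) by ring, Real.exp_neg]
      rw [hE, hE']
      have h0 : Real.exp ((ε*γs)*s) ≠ 0 := (Real.exp_pos _).ne'
      field_simp
      ring
    calc ‖xt s - x0‖ = ‖(NormedSpace.exp ((ε*s) • S) x0 - x0) +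
          ε • ∫ u in (0:ℝ)..s, NormedSpace.exp ((ε * (s - u)) • S)
            (g1 (xt u) (yt u + σ • ξ u))‖ := by
          rw [(hsol s hs).1]; simp only [RSslow]; congr 1; abel
      _ ≤ ‖NormedSpace.exp ((ε*s) • S) x0 - x0‖ +
          ‖ε • ∫ u in (0:ℝ)..s, NormedSpace.exp ((ε * (s - u)) • S)
            (g1 (xt u) (yt u + σ • ξ u))‖ := norm_add_le _ _
      _ ≤ ‖S x0‖/γs * (1 - Real.exp (ε*γs*s)) + C/γs * (1 - Real.exp (ε*γs*s)) := add_le_add h1 h2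
      _ = C₁ * (1 - Real.exp (ε*γs*s)) := by rw [hC₁def]; ring
  -- main pointwise estimate
  have hEst : ∀ t ≤ (0:ℝ), Real.exp (γ*t) * ‖yt t - y0fn t‖ ≤
      K*C₁*(Real.exp ((γ + ε*γs)*t)/(γf - ε*γs) - Real.exp (γ*t)/γf) + K*D*(1/(-(γ+γf))) := by
    intro t ht
    set h : ℝ → ℝ := fun s =>
      (K*C₁*Real.exp (γf*t)) * Real.exp ((-γf)*s)
      - (K*C₁*Real.exp (γf*t)) * Real.exp ((ε*γs - γf)*s)
      + (K*D*Real.exp (γf*t)) * Real.exp ((-(γ+γf))*s) with hhdef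
    have hh1 : IntegrableOn (fun s => (K*C₁*Real.exp (γf*t)) * Real.exp ((-γf)*s)) (Set.Iic t) :=
      (integrableOn_exp_mul_Iic ha1 t).const_mul _
    have hh2 : IntegrableOn (fun s => (K*C₁*Real.exp (γf*t)) * Real.exp ((ε*γs - γf)*s))
        (Set.Iic t) := (integrableOn_exp_mul_Iic ha2 t).const_mul _
    have hh3 : IntegrableOn (fun s => (K*D*Real.exp (γf*t)) * Real.exp ((-(γ+γf))*s))
        (Set.Iic t) := (integrableOn_exp_mul_Iic ha3 t).const_mul _
    have hhint : IntegrableOn h (Set.Iic t) := (hh1.sub hh2).add hh3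
    have hΔeq : yt t - y0fn t = ∫ s in Set.Iic t,
        ((NormedSpace.exp ((t - s) • F)) (g2 (xt s) (yt s + σ • ξ s))
          - (NormedSpace.exp ((t - s) • F)) (g2 x0 (y0fn s + σ • ξ s))) := by
      rw [(hsol t ht).2, hsol0 t ht]
      simp only [RSfast, Crit]
      rw [integral_sub (hGint t ht) (hG0int t ht)]
    have hnorm : ‖yt t - y0fn t‖ ≤ ∫ s in Set.Iic t, h s := by
      rw [hΔeq]
      refine (norm_integral_le_integral_norm _).trans ?_
      refine integral_mono_of_nonneg (ae_of_all _ fun s => norm_nonneg _) hhint ?_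
      filter_upwards [ae_restrict_mem measurableSet_Iic] with s hs
      rw [Set.mem_Iic] at hs
      have hs0 : s ≤ 0 := le_trans hs ht
      have key : (NormedSpace.exp ((t - s) • F)) (g2 (xt s) (yt s + σ • ξ s))
          - (NormedSpace.exp ((t - s) • F)) (g2 x0 (y0fn s + σ • ξ s))
          = (NormedSpace.exp ((t - s) • F))
              (g2 (xt s) (yt s + σ • ξ s) - g2 x0 (y0fn s + σ • ξ s)) :=
        (ContinuousLinearMap.map_sub _ _ _).symm
      rw [key]
      have hg : ‖g2 (xt s) (yt s + σ • ξ s) - g2 x0 (y0fn s + σ • ξ s)‖ ≤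
          K * (C₁*(1 - Real.exp (ε*γs*s)) + D*Real.exp (-γ*s)) := by
        refine (hg2l _ _ _ _).trans ?_
        have e1 : ‖(yt s + σ • ξ s) - (y0fn s + σ • ξ s)‖ = ‖yt s - y0fn s‖ := by
          congr 1; abel
        rw [e1]
        exact mul_le_mul_of_nonneg_left (add_le_add (hslow s hs0) (hDle s hs0)) hK.le
      have i1 : Real.exp (γf*(t-s)) = Real.exp (γf*t) * Real.exp ((-γf)*s) := by
        rw [← Real.exp_add]; congr 1; ring
      have i2 : Real.exp (ε*γs*s) * Real.exp ((-γf)*s) = Real.exp ((ε*γs - γf)*s) := by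
        rw [← Real.exp_add]; congr 1; ring
      have i3 : Real.exp (-γ*s) * Real.exp ((-γf)*s) = Real.exp ((-(γ+γf))*s) := by
        rw [← Real.exp_add]; congr 1; ring
      calc ‖(NormedSpace.exp ((t - s) • F))
            (g2 (xt s) (yt s + σ • ξ s) - g2 x0 (y0fn s + σ • ξ s))‖
          ≤ Real.exp (γf*(t-s)) *
            ‖g2 (xt s) (yt s + σ • ξ s) - g2 x0 (y0fn s + σ • ξ s)‖ := hF (t-s) (by linarith) _
        _ ≤ Real.exp (γf*(t-s)) * (K * (C₁*(1 - Real.exp (ε*γs*s)) + D*Real.exp (-γ*s))) :=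
            mul_le_mul_of_nonneg_left hg (Real.exp_pos _).le
        _ = h s := by
            simp only [hhdef]
            linear_combination (K*(C₁*(1 - Real.exp (ε*γs*s)) + D*Real.exp (-γ*s))) * i1
              - (K*C₁*Real.exp (γf*t)) * i2 + (K*D*Real.exp (γf*t)) * i3
    have hIval : ∫ s in Set.Iic t, h s =
        (K*C₁*Real.exp (γf*t)) * (Real.exp ((-γf)*t)/(-γf))
        - (K*C₁*Real.exp (γf*t)) * (Real.exp ((ε*γs - γf)*t)/(ε*γs - γf))
        + (K*D*Real.exp (γf*t)) * (Real.exp ((-(γ+γf))*t)/(-(γ+γf))) := by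
      have hh12 : IntegrableOn (fun s => (K*C₁*Real.exp (γf*t)) * Real.exp ((-γf)*s)
          - (K*C₁*Real.exp (γf*t)) * Real.exp ((ε*γs - γf)*s)) (Set.Iic t) := hh1.sub hh2
      have hsplit := integral_add (μ := volume.restrict (Set.Iic t)) hh12 hh3
      have hsplit2 := integral_sub (μ := volume.restrict (Set.Iic t)) hh1 hh2
      calc ∫ s in Set.Iic t, h s
          = (∫ s in Set.Iic t, (K*C₁*Real.exp (γf*t)) * Real.exp ((-γf)*s))
            - (∫ s in Set.Iic t, (K*C₁*Real.exp (γf*t)) * Real.exp ((ε*γs - γf)*s))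
            + ∫ s in Set.Iic t, (K*D*Real.exp (γf*t)) * Real.exp ((-(γ+γf))*s) := by
            simp only [hhdef]
            rw [hsplit, hsplit2]
        _ = _ := by
            rw [integral_const_mul, integral_const_mul, integral_const_mul,
              integral_exp_mul_Iic ha1, integral_exp_mul_Iic ha2, integral_exp_mul_Iic ha3]
    have hVq : Real.exp (γ*t) * ((K*C₁*Real.exp (γf*t)) * (Real.exp ((-γf)*t)/(-γf))
        - (K*C₁*Real.exp (γf*t)) * (Real.exp ((ε*γs - γf)*t)/(ε*γs - γf))
        + (K*D*Real.exp (γf*t)) * (Real.exp ((-(γ+γf))*t)/(-(γ+γf))))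
        = K*C₁*(Real.exp ((γ + ε*γs)*t)/(γf - ε*γs) - Real.exp (γ*t)/γf)
          + K*D*(1/(-(γ+γf))) := by
      rw [show ((-γf)*t) = -(γf*t) by ring, show ((ε*γs - γf)*t) = (ε*γs)*t + -(γf*t) by ring,
        show ((-(γ+γf))*t) = -(γ*t) + -(γf*t) by ring,
        show ((γ + ε*γs)*t) = γ*t + (ε*γs)*t by ring]
      simp only [Real.exp_add, Real.exp_neg]
      have hne1 : γf ≠ 0 := hγf.ne
      have hne2 : ε*γs - γf ≠ 0 := ha2.ne'
      have hne3 : γ+γf ≠ 0 := hgf.ne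
      have hne4 : γf - ε*γs ≠ 0 := (by linarith : γf - ε*γs < 0).ne
      have hE1 : Real.exp (γ*t) ≠ 0 := (Real.exp_pos _).ne'
      have hE2 : Real.exp (γf*t) ≠ 0 := (Real.exp_pos _).ne'
      have hE3 : Real.exp ((ε*γs)*t) ≠ 0 := (Real.exp_pos _).ne'
      have hne5 : -γ - γf ≠ 0 := by intro h; apply hne3; linarith
      rw [show -(γ+γf) = -γ - γf by ring]
      field_simp
      ring
    calc Real.exp (γ*t) * ‖yt t - y0fn t‖
        ≤ Real.exp (γ*t) * (∫ s in Set.Iic t, h s) :=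
          mul_le_mul_of_nonneg_left hnorm (Real.exp_pos _).le
      _ = _ := by rw [hIval]; exact hVq
  -- assembling the supremum bound
  set Q := ⨆ t : Set.Iic (0:ℝ),
    (Real.exp ((γ + ε*γs)*t.1)/(γf - ε*γs) - Real.exp (γ*t.1)/γf) with hQdef
  have hQb : BddAbove (Set.range fun t : Set.Iic (0:ℝ) =>
      Real.exp ((γ + ε*γs)*t.1)/(γf - ε*γs) - Real.exp (γ*t.1)/γf) := by
    refine ⟨1/(-γf), ?_⟩
    rintro v ⟨⟨s, hs⟩, rfl⟩
    simp only
    have hs' : s ≤ 0 := hs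
    have h1 : Real.exp ((γ + ε*γs)*s)/(γf - ε*γs) ≤ 0 :=
      div_nonpos_of_nonneg_of_nonpos (Real.exp_pos _).le (by linarith)
    have h2 : Real.exp (γ*s) ≤ 1 :=
      Real.exp_le_one_iff.mpr (mul_nonpos_of_nonneg_of_nonpos hγ.le hs')
    have h3 : (1:ℝ)*γf⁻¹ ≤ Real.exp (γ*s) * γf⁻¹ :=
      mul_le_mul_of_nonpos_right h2 (inv_nonpos.mpr hγf.le)
    have h4 : (1:ℝ)/(-γf) = -((1:ℝ)*γf⁻¹) := by rw [one_mul, one_div, inv_neg]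
    rw [div_eq_mul_inv (Real.exp (γ*s)), h4]
    linarith
  have hqQ : ∀ t ≤ (0:ℝ), Real.exp ((γ + ε*γs)*t)/(γf - ε*γs) - Real.exp (γ*t)/γf ≤ Q :=
    fun t ht => le_ciSup hQb ⟨t, ht⟩
  have hC₁0 : 0 ≤ C₁ := by rw [hC₁def]; positivity
  have hKC₁ : 0 ≤ K*C₁ := mul_nonneg hK.le hC₁0
  have hDle2 : D ≤ K*C₁*Q + K*D*(1/(-(γ+γf))) := by
    have hDsup : D = ⨆ p : Set.Iic (0:ℝ), Real.exp (γ*p.1) * ‖yt p.1 - y0fn p.1‖ := by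
      rw [hDdef]; simp only [negNorm, neg_neg]
    conv_lhs => rw [hDsup]
    refine ciSup_le fun p => ?_
    have h1 := hEst p.1 p.2
    have h2 := mul_le_mul_of_nonneg_left (hqQ p.1 p.2) hKC₁
    linarith
  have hc0 : 0 < 1 + K/(γ+γf) := by
    have h1 : -1 < K/(γ+γf) := by
      rw [lt_div_iff_of_neg hgf]
      linarith
    linarith
  have hfinal : D*(1 + K/(γ+γf)) ≤ K*C₁*Q := by
    have hne : γ+γf ≠ 0 := hgf.ne
    have he : K*D*(1/(-(γ+γf))) = -(K/(γ+γf))*D := by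
      rw [mul_one_div, div_neg, neg_mul, div_mul_eq_mul_div]
    have h2 : D ≤ K*C₁*Q + -(K/(γ+γf))*D := by rw [← he]; exact hDle2
    nlinarith [h2]
  rw [div_mul_eq_mul_div, le_div_iff₀ hc0]
  linarith [hfinal]
end
end

section
/- Let γ > 0, γ_s > 0, γ_f < 0. For ε > 0 and t ≤ 0 define q(t, ε) := e^{(γ+εγ_s)t}/(γ_f − εγ_s) − e^{γt}/γ_f. Then q(t, ε) ≥ 0 for all t ≤ 0 and all ε > 0, and lim_{ε→0⁺} sup_{t≤0} q(t, ε) = 0. -/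
open Filter

theorem q_nonneg (γ γs γf : ℝ) (hγ : 0 < γ) (hγs : 0 < γs) (hγf : γf < 0)
    (ε : ℝ) (hε : 0 < ε) (t : ℝ) (ht : t ≤ 0) :
    0 ≤ Real.exp ((γ + ε * γs) * t) / (γf - ε * γs) - Real.exp (γ * t) / γf := by
  have hd : γf - ε * γs < 0 := by nlinarith
  have hAB : Real.exp ((γ + ε * γs) * t) ≤ Real.exp (γ * t) :=
    Real.exp_le_exp.mpr (by nlinarith [mul_nonneg (mul_nonneg hε.le hγs.le) (neg_nonneg.mpr ht)])
  have hApos := Real.exp_pos ((γ + ε * γs) * t)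
  rw [div_sub_div _ _ hd.ne hγf.ne, le_div_iff₀ (mul_pos_of_neg_of_neg hd hγf)]
  nlinarith [mul_nonneg (sub_nonneg.mpr hAB) (neg_nonneg.mpr hγf.le),
    mul_pos (mul_pos hε hγs) (Real.exp_pos (γ * t))]

theorem q_le (γ γs γf : ℝ) (hγ : 0 < γ) (hγs : 0 < γs) (hγf : γf < 0)
    (ε : ℝ) (hε : 0 < ε) (t : ℝ) (ht : t ≤ 0) :
    Real.exp ((γ + ε * γs) * t) / (γf - ε * γs) - Real.exp (γ * t) / γf
      ≤ ε * (γs * (γ - γf * Real.exp (-1)) / (γ * γf ^ 2)) := by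
  have hd : γf - ε * γs < 0 := by nlinarith
  have hγf2 : (0:ℝ) < γf ^ 2 := by nlinarith
  set A := Real.exp ((γ + ε * γs) * t) with hAdef
  set B := Real.exp (γ * t) with hBdef
  have hBpos : 0 < B := Real.exp_pos _
  have hB1 : B ≤ 1 := Real.exp_le_one_iff.mpr (by nlinarith)
  have hw : 1 + ε * γs * t ≤ Real.exp (ε * γs * t) := by
    have := Real.add_one_le_exp (ε * γs * t); linarith
  have hA : B * (1 + ε * γs * t) ≤ A := by
    have : A = B * Real.exp (ε * γs * t) := by
      rw [hAdef, hBdef, ← Real.exp_add]; ring_nf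
    rw [this]
    exact mul_le_mul_of_nonneg_left hw hBpos.le
  have h4 : (-(γ * t)) * B ≤ Real.exp (-1) := by
    have h := Real.add_one_le_exp (-(γ * t) - 1)
    have h2 := mul_le_mul_of_nonneg_right
      (by linarith : -(γ * t) ≤ Real.exp (-(γ * t) - 1)) hBpos.le
    rwa [hBdef, ← Real.exp_add, (by ring : -(γ * t) - 1 + γ * t = -1)] at h2
  have hm : (0:ℝ) < Real.exp (-1) := Real.exp_pos _
  have h3 : γf * (γ * t * B) ≤ -γf * Real.exp (-1) := by
    nlinarith [mul_le_mul_of_nonneg_left h4 (neg_nonneg.mpr hγf.le)]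
  rw [div_sub_div _ _ hd.ne hγf.ne,
    mul_div_assoc', div_le_div_iff₀ (mul_pos_of_neg_of_neg hd hγf) (mul_pos hγ hγf2)]
  have h2 : A * γf ≤ B * (1 + ε * γs * t) * γf :=
    mul_le_mul_of_nonpos_right hA hγf.le
  have hM : 0 < γ - γf * Real.exp (-1) := by nlinarith
  nlinarith [mul_le_mul_of_nonneg_right h2 (mul_pos hγ hγf2).le,
    mul_le_mul_of_nonneg_left h3 (mul_nonneg (mul_nonneg hε.le hγs.le) hγf2.le),
    mul_le_mul_of_nonneg_left hB1 (mul_pos (mul_pos (mul_pos hε hγs) hγ) hγf2).le,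
    mul_pos (mul_pos (mul_pos hε hγs) hM) (mul_pos (mul_pos hε hγs) (neg_pos.mpr hγf))]


/-- The kernel `q(t,ε) = e^{(γ+εγ_s)t}/(γ_f-εγ_s) - e^{γt}/γ_f` is
nonnegative for `t ≤ 0`, and `sup_{t≤0} q(t,ε) → 0` as `ε → 0⁺`. -/
theorem kernel_q_nonneg_and_sup_tendsto_zero
    (γ γs γf : ℝ) (hγ : 0 < γ) (hγs : 0 < γs) (hγf : γf < 0) :
    (∀ ε > (0:ℝ), ∀ t ≤ (0:ℝ),
      0 ≤ Real.exp ((γ + ε * γs) * t) / (γf - ε * γs) - Real.exp (γ * t) / γf) ∧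
    Tendsto (fun ε : ℝ => ⨆ t : Set.Iic (0:ℝ),
        (Real.exp ((γ + ε * γs) * t.1) / (γf - ε * γs) - Real.exp (γ * t.1) / γf))
      (nhdsWithin 0 (Set.Ioi 0)) (nhds 0) := by
  refine ⟨fun ε hε t ht => q_nonneg γ γs γf hγ hγs hγf ε hε t ht, ?_⟩
  set C := γs * (γ - γf * Real.exp (-1)) / (γ * γf ^ 2) with hC
  have hnonneg : ∀ ε ∈ Set.Ioi (0:ℝ), (0:ℝ) ≤ ⨆ t : Set.Iic (0:ℝ),
      (Real.exp ((γ + ε * γs) * t.1) / (γf - ε * γs) - Real.exp (γ * t.1) / γf) := by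
    intro ε hε
    exact Real.iSup_nonneg fun t => q_nonneg γ γs γf hγ hγs hγf ε hε t.1 t.2
  have hub : ∀ ε ∈ Set.Ioi (0:ℝ), (⨆ t : Set.Iic (0:ℝ),
      (Real.exp ((γ + ε * γs) * t.1) / (γf - ε * γs) - Real.exp (γ * t.1) / γf)) ≤ ε * C := by
    intro ε hε
    exact ciSup_le fun t => q_le γ γs γf hγ hγs hγf ε hε t.1 t.2
  have hlim : Tendsto (fun ε : ℝ => ε * C) (nhdsWithin 0 (Set.Ioi 0)) (nhds 0) := by
    have : Tendsto (fun ε : ℝ => ε * C) (nhds 0) (nhds (0 * C)) :=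
      (continuous_id.mul continuous_const).tendsto 0
    simpa using this.mono_left nhdsWithin_le_nhds
  exact squeeze_zero' (eventually_nhdsWithin_of_forall hnonneg)
    (eventually_nhdsWithin_of_forall hub) hlim
end

section
/- (Pathwise convergence of the slow manifold to the critical manifold.) Assume moreover that ‖g₁(x,y)‖ ≤ C for all (x,y), for some constant C > 0. For each sufficiently small ε > 0 (so that ρ(ε) < 1), let h̃^ε(x₀) := ỹ^ε(0), where (x̃^ε, ỹ^ε) is the unique C_{−γ}^−(E₁ × E₂) solution of the time-rescaled slow–fast integral system with initial slow value x₀, and let h⁰(x₀) := y⁰(0), where y⁰ is the unique C_{−γ}^−(E₂) solution of the critical integral equation y⁰(t) = ∫_{−∞}^t exp((t−s)F) g₂(x₀, y⁰(s) + σξ(s)) ds. Then for every x₀ ∈ E₁, lim_{ε→0⁺} h̃^ε(x₀) = h⁰(x₀). -/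
open MeasureTheory Real Filter

noncomputable section

variable {E₁ E₂ : Type*}
  [NormedAddCommGroup E₁] [NormedSpace ℝ E₁]
  [NormedAddCommGroup E₂] [NormedSpace ℝ E₂]

section AuxLemmas
open Set Topology

lemma integrableOn_exp_mul_Iic' {a : ℝ} (ha : 0 < a) (t : ℝ) :
    IntegrableOn (fun s : ℝ => Real.exp (a * s)) (Set.Iic t) := by
  refine MeasureTheory.integrableOn_Iic_of_intervalIntegral_norm_bounded
      (Real.exp (a * t) / a) t ?_ (tendsto_id (α := ℝ)) ?_
  · intro i
    exact ((Real.continuous_exp.comp (continuous_const.mul continuous_id)).integrableOn_Ioc)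
  · filter_upwards with i
    have h1 : (∫ x in i..t, ‖Real.exp (a * x)‖) = ∫ x in i..t, Real.exp (a * x) := by
      simp [Real.norm_eq_abs, abs_exp]
    rw [show (id i : ℝ) = i from rfl, h1]
    have h2 : (∫ x in i..t, Real.exp (a * x)) = a⁻¹ • ∫ x in a*i..a*t, Real.exp x := by
      simpa using intervalIntegral.integral_comp_mul_left (a := i) (b := t) Real.exp ha.ne'
    rw [h2, show (∫ x in a*i..a*t, Real.exp x) = Real.exp (a*t) - Real.exp (a*i) from
      integral_exp]
    rw [smul_eq_mul, div_eq_inv_mul]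
    have := (Real.exp_pos (a*i)).le
    nlinarith [inv_pos.mpr ha]

lemma integral_exp_mul_Iic' {a : ℝ} (ha : 0 < a) (t : ℝ) :
    ∫ s in Set.Iic t, Real.exp (a * s) = Real.exp (a * t) / a := by
  have hder : ∀ x ∈ Set.Iic t, HasDerivAt (fun x => Real.exp (a*x)/a) (Real.exp (a*x)) x := by
    intro x _
    have h1 : HasDerivAt (fun x : ℝ => Real.exp (a*x)) (Real.exp (a*x) * a) x := by
      simpa using ((hasDerivAt_id x).const_mul a).exp
    have h2 := h1.div_const a
    simpa [mul_div_assoc, mul_div_cancel_right₀ _ ha.ne'] using h2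
  have htend : Tendsto (fun x => Real.exp (a*x)/a) atBot (𝓝 (0/a)) := by
    apply Tendsto.div_const
    exact Real.tendsto_exp_atBot.comp (tendsto_id.const_mul_atBot ha)
  have := MeasureTheory.integral_Iic_of_hasDerivAt_of_tendsto' hder
    (integrableOn_exp_mul_Iic ha t) htend
  simpa using this

lemma bdd_of_rangeBdd {E : Type*} [NormedAddCommGroup E] {γ : ℝ} {φ : ℝ → E}
    (h : BddAbove (Set.range fun t : Set.Iic (0:ℝ) => Real.exp (-(-γ) * t.1) * ‖φ t.1‖)) :
    ∃ M, 0 ≤ M ∧ ∀ s ≤ (0:ℝ), ‖φ s‖ ≤ M * Real.exp (-γ * s) := by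
  obtain ⟨M, hM⟩ := h
  have key : ∀ s ≤ (0:ℝ), Real.exp (γ * s) * ‖φ s‖ ≤ M := by
    intro s hs
    have := hM (Set.mem_range_self (⟨s, Set.mem_Iic.mpr hs⟩ : Set.Iic (0:ℝ)))
    simpa [neg_neg] using this
  refine ⟨M, ?_, ?_⟩
  · have := key 0 le_rfl
    simp only [mul_zero, Real.exp_zero, one_mul] at this
    exact le_trans (norm_nonneg _) this
  · intro s hs
    calc ‖φ s‖ = Real.exp (-γ*s) * (Real.exp (γ*s) * ‖φ s‖) := by
          rw [← mul_assoc, ← Real.exp_add]; simp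
    _ ≤ Real.exp (-γ*s) * M := mul_le_mul_of_nonneg_left (key s hs) (Real.exp_pos _).le
    _ = M * Real.exp (-γ*s) := mul_comm _ _

set_option synthInstance.maxHeartbeats 1000000 in
lemma aesm_integrand {E₂ : Type*} [NormedAddCommGroup E₂] [NormedSpace ℝ E₂] [CompleteSpace E₂]
    (F : E₂ →L[ℝ] E₂) (t : ℝ) {v : ℝ → E₂}
    (hv : AEStronglyMeasurable v (volume.restrict (Set.Iic t))) :
    AEStronglyMeasurable (fun s => NormedSpace.exp ((t - s) • F) (v s))
      (volume.restrict (Set.Iic t)) := by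
  have hA : Continuous (fun s : ℝ => NormedSpace.exp ((t - s) • F)) :=
    (continuous_iff_continuousAt.2 fun x =>
      (NormedSpace.exp_analytic (𝕂 := ℝ) x).continuousAt).comp ((continuous_const.sub continuous_id).smul continuous_const)
  exact (isBoundedBilinearMap_apply.continuous.comp_aestronglyMeasurable
    (hA.aestronglyMeasurable.prodMk hv))

lemma conv_bound {E₂ : Type*} [NormedAddCommGroup E₂] [NormedSpace ℝ E₂] [CompleteSpace E₂]
    (F : E₂ →L[ℝ] E₂) {γf γ : ℝ} (hγγf : γ + γf < 0)
    (hF : ∀ t ≥ (0:ℝ), ∀ y : E₂, ‖NormedSpace.exp (t • F) y‖ ≤ Real.exp (γf*t) * ‖y‖)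
    (t : ℝ) {v : ℝ → E₂}
    (hv : AEStronglyMeasurable v (volume.restrict (Set.Iic t)))
    {c : ℝ} (hvb : ∀ s ≤ t, ‖v s‖ ≤ c * Real.exp (-γ * s)) :
    IntegrableOn (fun s => NormedSpace.exp ((t-s) • F) (v s)) (Set.Iic t) ∧
    ‖∫ s in Set.Iic t, NormedSpace.exp ((t-s) • F) (v s)‖
      ≤ c * Real.exp (-γ * t) / (-γ - γf) := by
  set b : ℝ := -γ - γf with hbdef
  have hb : 0 < b := by simp only [hbdef]; linarith
  have hc : 0 ≤ c := by nlinarith [Real.exp_pos (-γ*t), norm_nonneg (v t), hvb t le_rfl]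
  have hptw : ∀ s ∈ Set.Iic t, ‖NormedSpace.exp ((t-s) • F) (v s)‖
      ≤ (c * Real.exp (γf * t)) * Real.exp (b * s) := by
    intro s hs
    have hs' : s ≤ t := hs
    calc ‖NormedSpace.exp ((t-s) • F) (v s)‖
        ≤ Real.exp (γf * (t-s)) * ‖v s‖ := hF (t-s) (by linarith) (v s)
      _ ≤ Real.exp (γf * (t-s)) * (c * Real.exp (-γ * s)) :=
          mul_le_mul_of_nonneg_left (hvb s hs') (Real.exp_pos _).le
      _ = (c * Real.exp (γf * t)) * Real.exp (b * s) := by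
          rw [mul_comm, mul_assoc, ← Real.exp_add, mul_assoc, ← Real.exp_add]
          congr 2
          simp only [hbdef]; ring
  have hgint : IntegrableOn (fun s : ℝ => (c * Real.exp (γf * t)) * Real.exp (b * s))
      (Set.Iic t) := (integrableOn_exp_mul_Iic hb t).const_mul _
  have hae : ∀ᵐ s ∂(volume.restrict (Set.Iic t)),
      ‖NormedSpace.exp ((t-s) • F) (v s)‖ ≤ (c * Real.exp (γf * t)) * Real.exp (b * s) :=
    (ae_restrict_iff' measurableSet_Iic).mpr (ae_of_all _ hptw)
  have hint : IntegrableOn (fun s => NormedSpace.exp ((t-s) • F) (v s)) (Set.Iic t) :=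
    Integrable.mono' hgint (aesm_integrand F t hv) hae
  refine ⟨hint, ?_⟩
  calc ‖∫ s in Set.Iic t, NormedSpace.exp ((t-s) • F) (v s)‖
      ≤ ∫ s in Set.Iic t, (c * Real.exp (γf * t)) * Real.exp (b * s) :=
        norm_integral_le_of_norm_le hgint hae
    _ = (c * Real.exp (γf * t)) * (Real.exp (b * t) / b) := by
        rw [integral_const_mul, integral_exp_mul_Iic hb]
    _ = c * Real.exp (-γ * t) / (-γ - γf) := by
        have h3 : γf * t + b * t = -γ * t := by simp only [hbdef]; ring
        rw [mul_assoc, ← mul_div_assoc, ← Real.exp_add, h3, hbdef]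
        ring

lemma slow_dev {E₁ E₂ : Type*} [NormedAddCommGroup E₁] [NormedSpace ℝ E₁] [CompleteSpace E₁]
    [NormedAddCommGroup E₂] [NormedSpace ℝ E₂]
    (S : E₁ →L[ℝ] E₁) {γs : ℝ} (hγs : 0 < γs)
    (hS : ∀ t ≤ (0:ℝ), ∀ x : E₁, ‖NormedSpace.exp (t • S) x‖ ≤ Real.exp (γs * t) * ‖x‖)
    (g1 : E₁ → E₂ → E₁) {C : ℝ} (hC : 0 ≤ C) (hg1bd : ∀ x y, ‖g1 x y‖ ≤ C)
    {ε : ℝ} (hε : 0 < ε) (σ : ℝ) (ξ : ℝ → E₂) (x0 : E₁) (xt : ℝ → E₁) (yt : ℝ → E₂)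
    (s : ℝ) (hs : s ≤ 0) :
    ‖RSslow S g1 σ ε ξ x0 xt yt s - x0‖ ≤ ε * (‖S‖ * ‖x0‖ + C) * (-s) := by
  set T : E₁ →L[ℝ] E₁ := ε • S with hT
  have hexp : ‖NormedSpace.exp ((ε * s) • S) x0 - x0‖ ≤ ε * (‖S‖ * ‖x0‖) * (-s) := by
    have hder : ∀ r : ℝ, HasDerivAt (fun r : ℝ => NormedSpace.exp (r • T) x0)
        ((NormedSpace.exp (r • T) * T) x0) r := by
      intro r
      exact (hasDerivAt_exp_smul_const (𝕂 := ℝ) T r).clm_apply (hasDerivAt_const r x0)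
        |>.congr_deriv (by simp)
    have hbound : ∀ r ∈ Set.Icc s 0, ‖(NormedSpace.exp (r • T) * T) x0‖ ≤ ε * (‖S‖ * ‖x0‖) := by
      intro r hr
      have h1 : (NormedSpace.exp (r • T) * T) x0 = NormedSpace.exp ((r * ε) • S) (T x0) := by
        rw [hT, smul_smul]
        rfl
      rw [h1]
      have h2 : (r * ε) ≤ 0 := mul_nonpos_of_nonpos_of_nonneg hr.2 hε.le
      calc ‖NormedSpace.exp ((r * ε) • S) (T x0)‖
          ≤ Real.exp (γs * (r * ε)) * ‖T x0‖ := hS _ h2 _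
        _ ≤ 1 * ‖T x0‖ := by
            apply mul_le_mul_of_nonneg_right _ (norm_nonneg _)
            rw [Real.exp_le_one_iff]
            nlinarith
        _ = ‖ε • (S x0)‖ := by rw [one_mul, hT]; rfl
        _ ≤ ε * (‖S‖ * ‖x0‖) := by
            rw [norm_smul, Real.norm_eq_abs, abs_of_pos hε]
            exact mul_le_mul_of_nonneg_left (S.le_opNorm x0) hε.le
    have := (convex_Icc s (0:ℝ)).norm_image_sub_le_of_norm_hasDerivWithin_le
      (fun r hr => (hder r).hasDerivWithinAt) hbound
      (Set.right_mem_Icc.mpr hs) (Set.left_mem_Icc.mpr hs)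
    have h0 : NormedSpace.exp ((0:ℝ) • T) x0 = x0 := by
      rw [zero_smul, NormedSpace.exp_zero]; rfl
    have h1 : (ε * s) • S = s • T := by rw [hT, smul_smul, mul_comm]
    rw [h1]
    calc ‖NormedSpace.exp (s • T) x0 - x0‖
        = ‖NormedSpace.exp (s • T) x0 - NormedSpace.exp ((0:ℝ) • T) x0‖ := by rw [h0]
      _ ≤ ε * (‖S‖ * ‖x0‖) * ‖s - 0‖ := this
      _ = ε * (‖S‖ * ‖x0‖) * (-s) := by
          rw [sub_zero, Real.norm_eq_abs, abs_of_nonpos hs]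
  have hint : ‖∫ u in (0:ℝ)..s,
      NormedSpace.exp ((ε * (s - u)) • S) (g1 (xt u) (yt u + σ • ξ u))‖ ≤ C * (-s) := by
    have h2 : ∀ u ∈ Set.uIoc (0:ℝ) s,
        ‖NormedSpace.exp ((ε * (s - u)) • S) (g1 (xt u) (yt u + σ • ξ u))‖ ≤ C := by
      intro u hu
      rw [Set.uIoc_comm, Set.uIoc_of_le hs] at hu
      have h3 : ε * (s - u) ≤ 0 := by nlinarith [hu.1]
      calc ‖NormedSpace.exp ((ε * (s - u)) • S) (g1 (xt u) (yt u + σ • ξ u))‖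
          ≤ Real.exp (γs * (ε * (s - u))) * ‖g1 (xt u) (yt u + σ • ξ u)‖ := hS _ h3 _
        _ ≤ 1 * C := by
            apply mul_le_mul (by rw [Real.exp_le_one_iff]; nlinarith) (hg1bd _ _)
              (norm_nonneg _) zero_le_one
        _ = C := one_mul C
    calc ‖∫ u in (0:ℝ)..s,
        NormedSpace.exp ((ε * (s - u)) • S) (g1 (xt u) (yt u + σ • ξ u))‖
        ≤ C * |s - 0| := intervalIntegral.norm_integral_le_of_norm_le_const h2
      _ = C * (-s) := by rw [sub_zero, abs_of_nonpos hs]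
  calc ‖RSslow S g1 σ ε ξ x0 xt yt s - x0‖
      = ‖(NormedSpace.exp ((ε * s) • S) x0 - x0) +
          ε • ∫ u in (0:ℝ)..s,
            NormedSpace.exp ((ε * (s - u)) • S) (g1 (xt u) (yt u + σ • ξ u))‖ := by
        rw [RSslow]; congr 1; abel
    _ ≤ ‖NormedSpace.exp ((ε * s) • S) x0 - x0‖ +
          ‖ε • ∫ u in (0:ℝ)..s,
            NormedSpace.exp ((ε * (s - u)) • S) (g1 (xt u) (yt u + σ • ξ u))‖ :=
        norm_add_le _ _
    _ ≤ ε * (‖S‖ * ‖x0‖) * (-s) + ε * (C * (-s)) := by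
        apply add_le_add hexp
        rw [norm_smul, Real.norm_eq_abs, abs_of_pos hε]
        exact mul_le_mul_of_nonneg_left hint hε.le
    _ = ε * (‖S‖ * ‖x0‖ + C) * (-s) := by ring

end AuxLemmas

set_option maxHeartbeats 4000000 in
set_option synthInstance.maxHeartbeats 1000000 in
/-- Pathwise convergence of the slow manifold to the critical manifold:
`h̃^ε(x₀) → h⁰(x₀)` as `ε → 0⁺`. -/
theorem slowManifold_tendsto_criticalManifold
    {E₁ E₂ : Type*}
    [NormedAddCommGroup E₁] [NormedSpace ℝ E₁] [FiniteDimensional ℝ E₁] [MeasurableSpace E₁] [BorelSpace E₁]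
    [NormedAddCommGroup E₂] [NormedSpace ℝ E₂] [FiniteDimensional ℝ E₂] [MeasurableSpace E₂] [BorelSpace E₂]
    (S : E₁ →L[ℝ] E₁) (F : E₂ →L[ℝ] E₂)
    (γs γf γ K σ : ℝ)
    (hγs : 0 < γs) (hγf : γf < 0) (hγ : 0 < γ) (hK : 0 < K)
    (hgap : K < -(γ + γf)) (hσ : 0 ≤ σ)
    (hS : ∀ t ≤ (0:ℝ), ∀ x : E₁, ‖NormedSpace.exp (t • S) x‖ ≤ Real.exp (γs * t) * ‖x‖)
    (hF : ∀ t ≥ (0:ℝ), ∀ y : E₂, ‖NormedSpace.exp (t • F) y‖ ≤ Real.exp (γf * t) * ‖y‖)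
    (g1 : E₁ → E₂ → E₁) (g2 : E₁ → E₂ → E₂)
    (hg1l : ∀ x₁ y₁ x₂ y₂, ‖g1 x₁ y₁ - g1 x₂ y₂‖ ≤ K * (‖x₁ - x₂‖ + ‖y₁ - y₂‖))
    (hg2l : ∀ x₁ y₁ x₂ y₂, ‖g2 x₁ y₁ - g2 x₂ y₂‖ ≤ K * (‖x₁ - x₂‖ + ‖y₁ - y₂‖))
    (hg10 : g1 0 0 = 0) (hg20 : g2 0 0 = 0)
    (ξ : ℝ → E₂) (hξm : Measurable ξ)
    (hξb : ∀ r : ℝ, ∃ M, ∀ t : ℝ, |t| ≤ r → ‖ξ t‖ ≤ M)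
    (hξ : ∃ M, ∀ t ≤ (0:ℝ), Real.exp (γ * t) * ‖ξ t‖ ≤ M)
    (C : ℝ) (hC : 0 < C) (hg1bd : ∀ x y, ‖g1 x y‖ ≤ C)
    (x0 : E₁) (htil : ℝ → E₂)
    (hhe : ∀ ε : ℝ, 0 < ε → (ε * K / (γ + ε * γs) - K / (γ + γf)) < 1 →
      ∃ (xt : ℝ → E₁) (yt : ℝ → E₂),
        (MemCneg (-γ) xt ∧ MemCneg (-γ) yt) ∧
        (∀ t ≤ (0:ℝ), xt t = RSslow S g1 σ ε ξ x0 xt yt t ∧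
          yt t = RSfast F g2 σ ξ xt yt t) ∧
        htil ε = yt 0)
    (y0fn : ℝ → E₂)
    (hmem0 : MemCneg (-γ) y0fn)
    (hsol0 : ∀ t ≤ (0:ℝ), y0fn t = Crit F g2 σ ξ x0 y0fn t) :
    Tendsto htil (nhdsWithin 0 (Set.Ioi 0)) (nhds (y0fn 0)) := by
  classical
  haveI : Nonempty (Set.Iic (0:ℝ)) := ⟨⟨0, Set.mem_Iic.mpr le_rfl⟩⟩
  obtain ⟨Mξ', hMξ'⟩ := hξ
  set Mξ : ℝ := max Mξ' 0 with hMξdef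
  have hMξ0 : 0 ≤ Mξ := le_max_right _ _
  have hMξ : ∀ s ≤ (0:ℝ), ‖ξ s‖ ≤ Mξ * Real.exp (-γ * s) := by
    intro s hs
    have h1 : Real.exp (γ * s) * ‖ξ s‖ ≤ Mξ := le_trans (hMξ' s hs) (le_max_left _ _)
    calc ‖ξ s‖ = Real.exp (-γ*s) * (Real.exp (γ*s) * ‖ξ s‖) := by
          rw [← mul_assoc, ← Real.exp_add]; simp
    _ ≤ Real.exp (-γ*s) * Mξ := mul_le_mul_of_nonneg_left h1 (Real.exp_pos _).le
    _ = Mξ * Real.exp (-γ*s) := mul_comm _ _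
  obtain ⟨M0, hM00, hM0⟩ := bdd_of_rangeBdd (γ := γ) hmem0.2
  have hγγf : γ + γf < 0 := by linarith
  have hb : 0 < -γ - γf := by linarith
  set q : ℝ := K / (-γ - γf) with hqdef
  have hq0 : 0 < q := div_pos hK hb
  have hq1 : q < 1 := (div_lt_one hb).mpr (by linarith)
  set A : ℝ := (‖S‖ * ‖x0‖ + C) / γ with hAdef
  have hA0 : 0 ≤ A := by positivity
  set B : ℝ := q * A / (1 - q) with hBdef
  -- continuity of g2
  have hg2c : Continuous (fun p : E₁ × E₂ => g2 p.1 p.2) := by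
    have hlip : LipschitzWith (⟨2*K, by positivity⟩ : NNReal) (fun p : E₁ × E₂ => g2 p.1 p.2) := by
      apply LipschitzWith.of_dist_le_mul
      intro p p'
      have h1 := hg2l p.1 p.2 p'.1 p'.2
      have ha : dist p.1 p'.1 ≤ dist p p' := by rw [Prod.dist_eq]; exact le_max_left _ _
      have hbd : dist p.2 p'.2 ≤ dist p p' := by rw [Prod.dist_eq]; exact le_max_right _ _
      calc dist (g2 p.1 p.2) (g2 p'.1 p'.2) = ‖g2 p.1 p.2 - g2 p'.1 p'.2‖ := dist_eq_norm _ _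
      _ ≤ K*(‖p.1-p'.1‖+‖p.2-p'.2‖) := h1
      _ = K*(dist p.1 p'.1 + dist p.2 p'.2) := by rw [dist_eq_norm, dist_eq_norm]
      _ ≤ K*(dist p p' + dist p p') := by nlinarith [dist_nonneg (x := p) (y := p')]
      _ = ((⟨2*K, by positivity⟩ : NNReal) : ℝ) * dist p p' := by
          simp only [NNReal.coe_mk]; ring
    exact hlip.continuous
  have hgb : ∀ x y, ‖g2 x y‖ ≤ K * (‖x‖ + ‖y‖) := by
    intro x y
    have := hg2l x y 0 0
    simpa [hg20] using this
  -- eventually ρ(ε) < 1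
  have hρ : ∀ᶠ ε in nhdsWithin 0 (Set.Ioi 0),
      (ε * K / (γ + ε * γs) - K / (γ + γf)) < 1 := by
    have hcont : ContinuousAt (fun ε : ℝ => ε * K / (γ + ε * γs) - K / (γ + γf)) 0 := by
      apply ContinuousAt.sub _ continuousAt_const
      apply ContinuousAt.div
      · exact (continuousAt_id.mul continuousAt_const)
      · exact continuousAt_const.add (continuousAt_id.mul continuousAt_const)
      · simp only [id_eq, zero_mul, add_zero]
        linarith
    have hval0 : (fun ε : ℝ => ε * K / (γ + ε * γs) - K / (γ + γf)) 0 < 1 := by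
      simp only [zero_mul, add_zero, zero_div, zero_sub]
      have heq : -(K / (γ + γf)) = q := by
        rw [hqdef, ← div_neg]
        congr 1
        ring
      rw [heq]
      exact hq1
    have htend : Tendsto (fun ε : ℝ => ε * K / (γ + ε * γs) - K / (γ + γf))
        (nhdsWithin 0 (Set.Ioi 0)) (nhds ((fun ε : ℝ => ε * K / (γ + ε * γs) - K / (γ + γf)) 0)) :=
      hcont.tendsto.mono_left nhdsWithin_le_nhds
    exact htend.eventually_lt_const hval0
  -- the key eventual bound
  have hbound : ∀ᶠ ε in nhdsWithin 0 (Set.Ioi 0), ‖htil ε - y0fn 0‖ ≤ B * ε := by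
    filter_upwards [hρ, self_mem_nhdsWithin] with ε hρε hεmem
    rw [Set.mem_Ioi] at hεmem
    have hε : 0 < ε := hεmem
    obtain ⟨xt, yt, ⟨hxm, hym⟩, hsol, hval⟩ := hhe ε hε hρε
    obtain ⟨Mx, hMx0, hMx⟩ := bdd_of_rangeBdd (γ := γ) hxm.2
    obtain ⟨My, hMy0, hMy⟩ := bdd_of_rangeBdd (γ := γ) hym.2
    -- deviation of the slow variable
    have hxdev : ∀ s ≤ (0:ℝ), ‖xt s - x0‖ ≤ ε * A * Real.exp (-γ * s) := by
      intro s hs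
      rw [(hsol s hs).1]
      refine (slow_dev S hγs hS g1 hC.le hg1bd hε σ ξ x0 xt yt s hs).trans ?_
      have h2 : γ * (-s) ≤ Real.exp (-γ * s) := by
        have := Real.add_one_le_exp (-γ * s)
        nlinarith
      have hA₀ : 0 ≤ ‖S‖ * ‖x0‖ + C := by positivity
      have h3 : (‖S‖ * ‖x0‖ + C) * (-s) ≤ A * Real.exp (-γ * s) := by
        rw [hAdef, div_mul_eq_mul_div, le_div_iff₀ hγ]
        nlinarith
      calc ε * (‖S‖ * ‖x0‖ + C) * (-s) = ε * ((‖S‖ * ‖x0‖ + C) * (-s)) := by ring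
        _ ≤ ε * (A * Real.exp (-γ * s)) := mul_le_mul_of_nonneg_left h3 hε.le
        _ = ε * A * Real.exp (-γ * s) := by ring
    -- the weighted distance D
    have hDbdd : BddAbove (Set.range fun p : Set.Iic (0:ℝ) =>
        Real.exp (γ * p.1) * ‖yt p.1 - y0fn p.1‖) := by
      refine ⟨My + M0, ?_⟩
      rintro z ⟨p, rfl⟩
      have h1 : ‖yt p.1 - y0fn p.1‖ ≤ (My + M0) * Real.exp (-γ * p.1) := by
        refine (norm_sub_le _ _).trans ?_
        have := hMy p.1 p.2
        have := hM0 p.1 p.2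
        nlinarith
      calc Real.exp (γ*p.1) * ‖yt p.1 - y0fn p.1‖
          ≤ Real.exp (γ*p.1) * ((My+M0) * Real.exp (-γ*p.1)) :=
            mul_le_mul_of_nonneg_left h1 (Real.exp_pos _).le
        _ = (My+M0) * (Real.exp (γ*p.1) * Real.exp (-γ*p.1)) := by ring
        _ = My + M0 := by rw [← Real.exp_add]; simp
    set D : ℝ := ⨆ p : Set.Iic (0:ℝ), Real.exp (γ * p.1) * ‖yt p.1 - y0fn p.1‖ with hDdef
    have hDverts : ∀ s ≤ (0:ℝ), ‖yt s - y0fn s‖ ≤ D * Real.exp (-γ * s) := by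
      intro s hs
      have h1 : Real.exp (γ*s) * ‖yt s - y0fn s‖ ≤ D :=
        le_ciSup hDbdd (⟨s, Set.mem_Iic.mpr hs⟩ : Set.Iic (0:ℝ))
      calc ‖yt s - y0fn s‖ = Real.exp (-γ*s) * (Real.exp (γ*s) * ‖yt s - y0fn s‖) := by
            rw [← mul_assoc, ← Real.exp_add]; simp
      _ ≤ Real.exp (-γ*s) * D := mul_le_mul_of_nonneg_left h1 (Real.exp_pos _).le
      _ = D * Real.exp (-γ*s) := mul_comm _ _
    have hD0 : 0 ≤ D := by
      have h1 : Real.exp (γ*(0:ℝ)) * ‖yt 0 - y0fn 0‖ ≤ D :=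
        le_ciSup hDbdd (⟨0, Set.mem_Iic.mpr le_rfl⟩ : Set.Iic (0:ℝ))
      have h2 : (0:ℝ) ≤ Real.exp (γ*(0:ℝ)) * ‖yt 0 - y0fn 0‖ := by positivity
      linarith
    -- measurability helpers
    have hξam : AEStronglyMeasurable ξ (volume.restrict (Set.Iic (0:ℝ))) :=
      hξm.aestronglyMeasurable.restrict
    -- the key pointwise estimate
    have key : ∀ t ≤ (0:ℝ), Real.exp (γ*t) * ‖yt t - y0fn t‖ ≤ q * (ε * A + D) := by
      intro t ht
      have hxtm : AEStronglyMeasurable xt (volume.restrict (Set.Iic t)) :=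
        (hxm.1.mono (Set.Iic_subset_Iic.mpr ht)).aestronglyMeasurable measurableSet_Iic
      have hytm : AEStronglyMeasurable yt (volume.restrict (Set.Iic t)) :=
        (hym.1.mono (Set.Iic_subset_Iic.mpr ht)).aestronglyMeasurable measurableSet_Iic
      have hy0m : AEStronglyMeasurable y0fn (volume.restrict (Set.Iic t)) :=
        (hmem0.1.mono (Set.Iic_subset_Iic.mpr ht)).aestronglyMeasurable measurableSet_Iic
      have hξtm : AEStronglyMeasurable ξ (volume.restrict (Set.Iic t)) :=
        hξm.aestronglyMeasurable.restrict
      have hv1m : AEStronglyMeasurable (fun s => g2 (xt s) (yt s + σ • ξ s))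
          (volume.restrict (Set.Iic t)) :=
        hg2c.comp_aestronglyMeasurable (hxtm.prodMk (hytm.add (hξtm.const_smul σ)))
      have hv2m : AEStronglyMeasurable (fun s => g2 x0 (y0fn s + σ • ξ s))
          (volume.restrict (Set.Iic t)) :=
        hg2c.comp_aestronglyMeasurable
          (aestronglyMeasurable_const.prodMk (hy0m.add (hξtm.const_smul σ)))
      have hσξ : ∀ s ≤ (0:ℝ), ‖σ • ξ s‖ ≤ σ * Mξ * Real.exp (-γ*s) := by
        intro s hs
        rw [norm_smul, Real.norm_eq_abs, abs_of_nonneg hσ, mul_assoc]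
        exact mul_le_mul_of_nonneg_left (hMξ s hs) hσ
      have hv1b : ∀ s ≤ t, ‖g2 (xt s) (yt s + σ • ξ s)‖
          ≤ (K*(Mx + My + σ*Mξ)) * Real.exp (-γ*s) := by
        intro s hs
        have hs0 : s ≤ 0 := le_trans hs ht
        have e1 := hMx s hs0
        have e4 : ‖yt s + σ • ξ s‖ ≤ My * Real.exp (-γ*s) + σ * Mξ * Real.exp (-γ*s) :=
          (norm_add_le _ _).trans (add_le_add (hMy s hs0) (hσξ s hs0))
        calc ‖g2 (xt s) (yt s + σ • ξ s)‖ ≤ K * (‖xt s‖ + ‖yt s + σ • ξ s‖) := hgb _ _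
          _ ≤ K * (Mx * Real.exp (-γ*s) + (My * Real.exp (-γ*s) + σ * Mξ * Real.exp (-γ*s))) :=
            mul_le_mul_of_nonneg_left (add_le_add e1 e4) hK.le
          _ = (K*(Mx + My + σ*Mξ)) * Real.exp (-γ*s) := by ring
      have hv2b : ∀ s ≤ t, ‖g2 x0 (y0fn s + σ • ξ s)‖
          ≤ (K*(‖x0‖ + M0 + σ*Mξ)) * Real.exp (-γ*s) := by
        intro s hs
        have hs0 : s ≤ 0 := le_trans hs ht
        have e1 : ‖x0‖ ≤ ‖x0‖ * Real.exp (-γ*s) := by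
          nlinarith [Real.one_le_exp (by nlinarith : (0:ℝ) ≤ -γ*s), norm_nonneg x0]
        have e4 : ‖y0fn s + σ • ξ s‖ ≤ M0 * Real.exp (-γ*s) + σ * Mξ * Real.exp (-γ*s) :=
          (norm_add_le _ _).trans (add_le_add (hM0 s hs0) (hσξ s hs0))
        calc ‖g2 x0 (y0fn s + σ • ξ s)‖ ≤ K * (‖x0‖ + ‖y0fn s + σ • ξ s‖) := hgb _ _
          _ ≤ K * (‖x0‖ * Real.exp (-γ*s) + (M0 * Real.exp (-γ*s) + σ * Mξ * Real.exp (-γ*s))) :=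
            mul_le_mul_of_nonneg_left (add_le_add e1 e4) hK.le
          _ = (K*(‖x0‖ + M0 + σ*Mξ)) * Real.exp (-γ*s) := by ring
      have hi1 : IntegrableOn
          (fun s => NormedSpace.exp ((t-s) • F) (g2 (xt s) (yt s + σ • ξ s)))
          (Set.Iic t) := (conv_bound F hγγf hF t hv1m hv1b).1
      have hi2 : IntegrableOn
          (fun s => NormedSpace.exp ((t-s) • F) (g2 x0 (y0fn s + σ • ξ s)))
          (Set.Iic t) := (conv_bound F hγγf hF t hv2m hv2b).1
      have hvdb : ∀ s ≤ t, ‖g2 (xt s) (yt s + σ • ξ s) - g2 x0 (y0fn s + σ • ξ s)‖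
          ≤ (K*(ε*A + D)) * Real.exp (-γ*s) := by
        intro s hs
        have hs0 : s ≤ 0 := le_trans hs ht
        have h1 : ‖g2 (xt s) (yt s + σ • ξ s) - g2 x0 (y0fn s + σ • ξ s)‖
            ≤ K * (‖xt s - x0‖ + ‖yt s - y0fn s‖) := by
          have := hg2l (xt s) (yt s + σ • ξ s) x0 (y0fn s + σ • ξ s)
          simpa [add_sub_add_right_eq_sub] using this
        calc ‖g2 (xt s) (yt s + σ • ξ s) - g2 x0 (y0fn s + σ • ξ s)‖
            ≤ K * (‖xt s - x0‖ + ‖yt s - y0fn s‖) := h1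
          _ ≤ K * (ε * A * Real.exp (-γ*s) + D * Real.exp (-γ*s)) :=
            mul_le_mul_of_nonneg_left (add_le_add (hxdev s hs0) (hDverts s hs0)) hK.le
          _ = (K*(ε*A + D)) * Real.exp (-γ*s) := by ring
      have hvdm : AEStronglyMeasurable
          (fun s => g2 (xt s) (yt s + σ • ξ s) - g2 x0 (y0fn s + σ • ξ s))
          (volume.restrict (Set.Iic t)) := hv1m.sub hv2m
      have hnorm : ‖∫ s in Set.Iic t, NormedSpace.exp ((t-s) • F)
            (g2 (xt s) (yt s + σ • ξ s) - g2 x0 (y0fn s + σ • ξ s))‖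
          ≤ (K*(ε*A + D)) * Real.exp (-γ * t) / (-γ - γf) :=
        (conv_bound F hγγf hF t hvdm hvdb).2
      have hdiff : yt t - y0fn t = ∫ s in Set.Iic t, NormedSpace.exp ((t-s) • F)
          (g2 (xt s) (yt s + σ • ξ s) - g2 x0 (y0fn s + σ • ξ s)) := by
        rw [(hsol t ht).2, hsol0 t ht, RSfast, Crit, ← integral_sub hi1 hi2]
        congr 1
        funext s
        rw [map_sub]
      rw [hdiff]
      have hexpid : Real.exp (γ*t) * Real.exp (-γ*t) = 1 := by rw [← Real.exp_add]; simp
      calc Real.exp (γ*t) * ‖∫ s in Set.Iic t, NormedSpace.exp ((t-s) • F)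
            (g2 (xt s) (yt s + σ • ξ s) - g2 x0 (y0fn s + σ • ξ s))‖
          ≤ Real.exp (γ*t) * ((K*(ε*A + D)) * Real.exp (-γ * t) / (-γ - γf)) :=
            mul_le_mul_of_nonneg_left hnorm (Real.exp_pos _).le
        _ = (K*(ε*A + D)) * (Real.exp (γ*t) * Real.exp (-γ*t)) / (-γ - γf) := by ring
        _ = q * (ε * A + D) := by rw [hexpid, hqdef]; ring
    -- conclude
    have hDle : D ≤ q * (ε * A + D) := ciSup_le (fun p => key p.1 p.2)
    have h00 : ‖yt 0 - y0fn 0‖ ≤ D := by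
      have h1 : Real.exp (γ*(0:ℝ)) * ‖yt 0 - y0fn 0‖ ≤ D :=
        le_ciSup hDbdd (⟨0, Set.mem_Iic.mpr le_rfl⟩ : Set.Iic (0:ℝ))
      simpa using h1
    rw [hval, hBdef, div_mul_eq_mul_div, le_div_iff₀ (by linarith : (0:ℝ) < 1 - q)]
    nlinarith [mul_le_mul_of_nonneg_right h00 (by linarith : (0:ℝ) ≤ 1 - q), hDle]
  -- finish by squeezing
  have h0 : Tendsto (fun ε => htil ε - y0fn 0) (nhdsWithin 0 (Set.Ioi 0)) (nhds 0) := by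
    apply squeeze_zero_norm' hbound
    have h1 : Tendsto (fun ε : ℝ => B * ε) (nhds (0:ℝ)) (nhds (B * 0)) :=
      (continuous_const.mul continuous_id).tendsto 0
    simpa using h1.mono_left nhdsWithin_le_nhds
  have h2 := h0.add_const (y0fn 0)
  simpa using h2
end
end
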